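/- Let (Γ,μ) be a weighted graph satisfying (p0), (VD) and (TC), and suppose the resolvent kernel bound holds: for some sufficiently large m>1 there is C>0 with g_{λ,m}(x,x) ≤ C·λ^{−m}/V(x,e(x,λ^{−1})) for all 0<λ<1 and x∈Γ. Then the local diagonal upper estimate (DUE) holds: p_n(x,x) ≤ C'/V(x,e(x,n)) for all x∈Γ, n>0. -/

import Mathlib

open Classical

noncomputable section

/-- A weighted graph: symmetric nonnegative edge weights, zero on the diagonal,
positive exactly on edges, with finitely many neighbours at each vertex. -/
structure WeightedGraph (V : Type*) where
  w : V → V → ℝ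
  w_symm : ∀ x y, w x y = w y x
  w_nonneg : ∀ x y, 0 ≤ w x y
  w_irrefl : ∀ x, w x x = 0
  locFin : ∀ x, {y | 0 < w x y}.Finite

/-- A space-time scale function is proper. -/
def properF (F : ℕ → ℝ) : Prop :=
  StrictMono F ∧
  (∃ D : ℝ, 0 < D ∧ ∀ R : ℕ, F (2 * R) ≤ D * F R) ∧
  (∀ R S : ℕ, F R + F S ≤ F (R + S)) ∧
  (∃ (A : ℕ) (B : ℝ), 1 < A ∧ 1 < B ∧ ∀ R : ℕ, B * F R ≤ F (A * R)) ∧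
  (∃ c : ℝ, 0 < c ∧ ∀ R : ℕ, c * (R : ℝ) ^ 2 ≤ F R)

/-- A proper scale function satisfying the strong anti-doubling property `B_F > A_F`. -/
def veryProperF (F : ℕ → ℝ) : Prop :=
  properF F ∧
  (∃ (A : ℕ) (B : ℝ), 1 < A ∧ (A : ℝ) < B ∧ ∀ R : ℕ, B * F R ≤ F (A * R))

/-- The (generalized) inverse of a scale function. -/
def finvF (F : ℕ → ℝ) (t : ℝ) : ℕ := sInf {R : ℕ | t ≤ F R}

/-- The sub-Gaussian kernel `k(n,R)`: the maximal integer `k ≥ 1` with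
`n/k ≤ F(⌊R/k⌋)`, and `0` if there is none. -/
def kkerF (F : ℕ → ℝ) (n R : ℕ) : ℕ :=
  sSup {k : ℕ | 1 ≤ k ∧ (n : ℝ) / (k : ℝ) ≤ F (R / k)}

namespace WeightedGraph

variable {V : Type*}

/-- The underlying simple graph. -/
def toSimpleGraph (G : WeightedGraph V) : SimpleGraph V where
  Adj x y := 0 < G.w x y
  symm := by
    constructor
    intro x y h
    rw [G.w_symm y x]
    exact h
  loopless := by
    constructor
    intro x h
    rw [G.w_irrefl x] at h
    exact lt_irrefl 0 h

/-- The graph (shortest path) distance. -/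
def gdist (G : WeightedGraph V) (x y : V) : ℕ := G.toSimpleGraph.dist x y

/-- The open metric ball `B(x,r) = {y : d(x,y) < r}`. -/
def ball (G : WeightedGraph V) (x : V) (r : ℝ) : Set V := {y | (G.gdist x y : ℝ) < r}

/-- The sphere `S(x,R) = {y : d(x,y) = R}`. -/
def sphere (G : WeightedGraph V) (x : V) (R : ℕ) : Set V := {y | G.gdist x y = R}

/-- The external boundary of a set. -/
def extBoundary (G : WeightedGraph V) (A : Set V) : Set V :=
  {y | y ∉ A ∧ ∃ x ∈ A, 0 < G.w x y}

/-- The vertex measure `μ(x) = Σ_{y ∼ x} μ_{xy}`. -/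
def mu (G : WeightedGraph V) (x : V) : ℝ := ∑' y, G.w x y

/-- The volume `V(x,r) = μ(B(x,r))`. -/
def vol (G : WeightedGraph V) (x : V) (r : ℝ) : ℝ := ∑' y : G.ball x r, G.mu y.1

/-- The volume of the annulus `v(x,s,r) = V(x,r) - V(x,s)`. -/
def annv (G : WeightedGraph V) (x : V) (s r : ℝ) : ℝ := G.vol x r - G.vol x s

/-- One-step transition probability `P(x,y) = μ_{xy}/μ(x)`. -/
def Pstep (G : WeightedGraph V) (x y : V) : ℝ := G.w x y / G.mu x

/-- `n`-step transition probability. -/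
def Pn (G : WeightedGraph V) : ℕ → V → V → ℝ
  | 0, x, y => if x = y then 1 else 0
  | n + 1, x, y => ∑' z, G.Pstep x z * Pn G n z y

/-- The heat kernel `p_n(x,y) = P_n(x,y)/μ(y)`. -/
def hk (G : WeightedGraph V) (n : ℕ) (x y : V) : ℝ := G.Pn n x y / G.mu y

/-- One step of the walk killed on exiting `A`. -/
def PstepA (G : WeightedGraph V) (A : Set V) (x y : V) : ℝ :=
  if x ∈ A ∧ y ∈ A then G.Pstep x y else 0

/-- `n`-step transition probability of the killed walk. -/
def PnA (G : WeightedGraph V) (A : Set V) : ℕ → V → V → ℝ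
  | 0, x, y => if x = y ∧ x ∈ A then 1 else 0
  | n + 1, x, y => ∑' z, G.PstepA A x z * PnA G A n z y

/-- The local Green kernel `g^A(y,z) = (Σ_k P_k^A(y,z))/μ(z)`. -/
def green (G : WeightedGraph V) (A : Set V) (y z : V) : ℝ :=
  (∑' k, G.PnA A k y z) / G.mu z

/-- The mean exit time `E_z(A) = Σ_{k≥0} P_z(T_A > k) = Σ_k Σ_{y} P_k^A(z,y)`. -/
def meanExit (G : WeightedGraph V) (A : Set V) (z : V) : ℝ :=
  ∑' (k : ℕ), ∑' (y : V), G.PnA A k z y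

/-- `E(x,r)`: the mean exit time from the ball `B(x,r)` started at `x`. -/
def mexit (G : WeightedGraph V) (x : V) (r : ℝ) : ℝ := G.meanExit (G.ball x r) x

/-- `e(x,t) = min{R ∈ ℕ : E(x,R) ≥ t}`, the inverse of the mean exit time. -/
def einv (G : WeightedGraph V) (x : V) (t : ℝ) : ℕ := sInf {R : ℕ | t ≤ G.mexit x R}

/-- `P(T_A < n)` for the walk started at `z`. -/
def exitProbLT (G : WeightedGraph V) (A : Set V) (z : V) (n : ℕ) : ℝ :=
  1 - ∑' y, G.PnA A (n - 1) z y

/-- The local sub-Gaussian kernel `k̲(x,n,R)`. -/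
def lker (G : WeightedGraph V) (x : V) (n R : ℕ) : ℕ :=
  sSup {k : ℕ | 1 ≤ k ∧ (n : ℝ) / (k : ℝ) ≤ ⨅ y : G.ball x R, G.mexit y.1 ((R / k : ℕ) : ℝ)}

/-- `u` is harmonic on `A`. -/
def Harmonic (G : WeightedGraph V) (A : Set V) (u : V → ℝ) : Prop :=
  ∀ x ∈ A, (∑' y, G.Pstep x y * u y) = u x

/-- The Dirichlet form (energy). -/
def dirichletEnergy (G : WeightedGraph V) (f : V → ℝ) : ℝ :=
  (1 / 2) * ∑' p : V × V, G.w p.1 p.2 * (f p.1 - f p.2) ^ 2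

/-- The resistance between two disjoint sets. -/
def resistance (G : WeightedGraph V) (A B : Set V) : ℝ :=
  (sInf (G.dirichletEnergy '' {f | (∀ x ∈ A, f x = 1) ∧ ∀ x ∈ B, f x = 0}))⁻¹

/-- The resistance of the annulus `ρ(x,s,r) = ρ(B(x,s), Γ∖B(x,r))`. -/
def rho (G : WeightedGraph V) (x : V) (s r : ℝ) : ℝ :=
  G.resistance (G.ball x s) (G.ball x r)ᶜ

/-- The kernel of the `(λ,m)`-resolvent `((λ+1)I - P)^{-m}`. -/
def resolventKer (G : WeightedGraph V) (lam : ℝ) (m : ℕ) (x y : V) : ℝ :=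
  (∑' k : ℕ, (Nat.choose (k + m - 1) k : ℝ) * (1 + lam) ^ (-((m : ℤ) + (k : ℤ))) * G.Pn k x y) /
    G.mu y

/-- `F(R) = inf_x E(x,R)`. -/
def Fm (G : WeightedGraph V) (R : ℕ) : ℝ := ⨅ x : V, G.mexit x R

/-- Condition `(p0)`: controlled weights. -/
def P0 (G : WeightedGraph V) (p0 : ℝ) : Prop :=
  ∀ x y : V, 0 < G.w x y → p0 ≤ G.w x y / G.mu x

/-- Condition `(VD)`: volume doubling. -/
def VD (G : WeightedGraph V) : Prop :=
  ∃ D : ℝ, 0 < D ∧ ∀ (x : V) (R : ℝ), 0 < R → G.vol x (2 * R) ≤ D * G.vol x R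

/-- Condition `(TC)`: the time comparison principle. -/
def TC (G : WeightedGraph V) : Prop :=
  ∃ C : ℝ, 1 < C ∧ ∀ (x : V) (R : ℝ), 0 < R → ∀ y ∈ G.ball x R,
    G.mexit x (2 * R) ≤ C * G.mexit y R

/-- Condition `(TD)`: time doubling. -/
def TD (G : WeightedGraph V) : Prop :=
  ∃ D : ℝ, 0 < D ∧ ∀ (x : V) (R : ℝ), 0 ≤ R → G.mexit x (2 * R) ≤ D * G.mexit x R

/-- Condition `(E)`: the mean exit time is uniform in the space. -/
def UniformE (G : WeightedGraph V) : Prop :=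
  ∃ C : ℝ, 1 < C ∧ ∀ (x y : V) (R : ℝ), 0 < R → G.mexit x R ≤ C * G.mexit y R

/-- The mean value inequality `(MV)`. -/
def MV (G : WeightedGraph V) : Prop :=
  ∃ C : ℝ, 0 < C ∧ ∀ (x : V) (R : ℝ) (u : V → ℝ), 0 < R → (∀ y, 0 ≤ u y) →
    G.Harmonic (G.ball x R) u →
    u x ≤ C / G.vol x R * ∑' y : G.ball x R, u y.1 * G.mu y.1

/-- The local diagonal upper estimate `(DUE)`. -/
def DUE (G : WeightedGraph V) : Prop :=
  ∃ C : ℝ, 0 < C ∧ ∀ (x : V) (n : ℕ), 0 < n →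
    G.hk n x x ≤ C / G.vol x (G.einv x n)

/-- The off-diagonal upper estimate `(UE)`. -/
def UE (G : WeightedGraph V) : Prop :=
  ∃ C β c : ℝ, 0 < C ∧ 1 < β ∧ 0 < c ∧ ∀ (x y : V) (n : ℕ), 0 < n →
    G.hk n x y ≤ C / G.vol x (G.einv x n) *
      Real.exp (-(c * (G.mexit x (G.gdist x y) / n) ^ ((1 : ℝ) / (β - 1))))

/-- A nonnegative Dirichlet solution of the heat equation `P^A u_n = u_{n+1}` up to time `N`. -/
def DirSol (G : WeightedGraph V) (A : Set V) (N : ℕ) (u : ℕ → V → ℝ) : Prop :=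
  (∀ n y, 0 ≤ u n y) ∧ ∀ n, n < N → ∀ z ∈ A, (∑' y, G.PstepA A z y * u n y) = u (n + 1) z

/-- The parabolic mean value inequality `(PMV)`. -/
def PMV (G : WeightedGraph V) : Prop :=
  ∃ c1 c2 C : ℝ, 0 ≤ c1 ∧ c1 < c2 ∧ 1 < C ∧
    ∀ (x : V) (R : ℝ) (u : ℕ → V → ℝ), 0 < R →
      G.DirSol (G.ball x R) ⌊c2 * G.mexit x R⌋₊ u →
      u ⌊c2 * G.mexit x R⌋₊ x ≤ C / (G.vol x R * G.mexit x R) *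
        ∑ i ∈ Finset.Icc ⌊c1 * G.mexit x R⌋₊ ⌊c2 * G.mexit x R⌋₊,
          ∑' y : G.ball x R, u i y.1 * G.mu y.1

/-- The skewed parabolic mean value inequality. -/
def SPMV (G : WeightedGraph V) : Prop :=
  ∃ c1 c2 C : ℝ, 0 < c1 ∧ c1 < c2 ∧ 1 ≤ C ∧
    ∀ (x : V) (R : ℝ) (y : V) (u : ℕ → V → ℝ), 0 < R → y ∈ G.ball x R →
      G.DirSol (G.ball x R) ⌊c2 * G.mexit x R⌋₊ u →
      u ⌊c2 * G.mexit x R⌋₊ x ≤ C / (G.vol y (2 * R) * G.mexit y (2 * R)) *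
        ∑ i ∈ Finset.Icc ⌊c1 * G.mexit x R⌋₊ ⌊c2 * G.mexit x R⌋₊,
          ∑' z : G.ball x R, u i z.1 * G.mu z.1

/-- The mean value property for Green kernels `(MVG)`. -/
def MVG (G : WeightedGraph V) : Prop :=
  ∃ C : ℝ, 1 < C ∧ ∀ (x : V) (R : ℝ) (y : V), 0 < R → 0 < G.gdist x y →
    G.green (G.ball x R) y x ≤ C / G.vol x (G.gdist x y) *
      ∑' z : G.ball x (G.gdist x y : ℝ), G.green (G.ball x R) y z.1 * G.mu z.1

/-- The Green kernel bound `(g01)`: `g^B(y,x) ≤ C·E(x,R)/V(x,d(x,y))`. -/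
def G01 (G : WeightedGraph V) : Prop :=
  ∃ C : ℝ, 1 < C ∧ ∀ (x : V) (R : ℝ) (y : V), 0 < R → 0 < G.gdist x y →
    G.green (G.ball x R) y x ≤ C * G.mexit x R / G.vol x (G.gdist x y)

/-- The elliptic Harnack inequality `(H)`. -/
def EH (G : WeightedGraph V) : Prop :=
  ∃ C : ℝ, 0 < C ∧ ∀ (x : V) (R : ℝ) (u : V → ℝ), 0 < R → (∀ y, 0 ≤ u y) →
    G.Harmonic (G.ball x (2 * R)) u → ∀ y ∈ G.ball x R, ∀ z ∈ G.ball x R, u y ≤ C * u z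

/-- The sub-Gaussian upper estimate `(UE_F)` with respect to `F`. -/
def UEF (G : WeightedGraph V) (F : ℕ → ℝ) : Prop :=
  ∃ C c : ℝ, 0 < C ∧ 0 < c ∧ ∀ (x y : V) (n : ℕ), 0 < n →
    G.hk n x y ≤ C / G.vol x (finvF F n) *
      Real.exp (-(c * (kkerF F n (G.gdist x y) : ℝ)))

/-- The sub-Gaussian lower estimate `(LE_F)` with respect to `F`. -/
def LEF (G : WeightedGraph V) (F : ℕ → ℝ) : Prop :=
  ∃ c C : ℝ, 0 < c ∧ 0 < C ∧ ∀ (x y : V) (n : ℕ), 0 < n →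
    c / G.vol x (finvF F n) * Real.exp (-(C * (kkerF F n (G.gdist x y) : ℝ))) ≤
      G.hk n x y + G.hk (n + 1) x y

/-- The `F`-parabolic Harnack inequality. -/
def PHF (G : WeightedGraph V) (F : ℕ → ℝ) : Prop :=
  ∀ c1 c2 c3 c4 η : ℝ, 0 < c1 → c1 < c2 → c2 < c3 → c3 < c4 → 0 < η → η < 1 →
    ∃ CH : ℝ, 0 < CH ∧ ∀ (x : V) (R k : ℕ) (u : ℕ → V → ℝ), 0 < R →
      (∀ n y, 0 ≤ u n y) →
      (∀ n : ℕ, k ≤ n → (n : ℝ) < (k : ℝ) + F ⌊c4 * (R : ℝ)⌋₊ → ∀ z ∈ G.ball x R,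
        (∑' y, G.Pstep z y * u n y) = u (n + 1) z) →
      ∀ (nm np : ℕ), ∀ xm ∈ G.ball x (η * R), ∀ xp ∈ G.ball x (η * R),
        (k : ℝ) + F ⌊c1 * (R : ℝ)⌋₊ ≤ (nm : ℝ) → (nm : ℝ) ≤ (k : ℝ) + F ⌊c2 * (R : ℝ)⌋₊ →
        (k : ℝ) + F ⌊c3 * (R : ℝ)⌋₊ ≤ (np : ℝ) → (np : ℝ) ≤ (k : ℝ) + F ⌊c4 * (R : ℝ)⌋₊ →
        (G.gdist xm xp : ℝ) ≤ (np : ℝ) - (nm : ℝ) →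
        u nm xm ≤ CH * (u np xp + u (np + 1) xp)

end WeightedGraph

open WeightedGraph

namespace WeightedGraph

open Function

lemma summable_of_fin_supp {α : Type*} {f : α → ℝ} (h : (Function.support f).Finite) :
    Summable f :=
  summable_of_ne_finset_zero (s := h.toFinset) fun a ha => by
    by_contra hne
    exact ha (h.mem_toFinset.mpr hne)

lemma tsum_swap' {α β : Type*} {f : α → β → ℝ}
    (h : (Function.support (Function.uncurry f)).Finite) :
    ∑' a, ∑' b, f a b = ∑' b, ∑' a, f a b := by
  have hsum : Summable (Function.uncurry f) := summable_of_fin_supp h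
  exact (Summable.tsum_comm' hsum (fun a => hsum.prod_factor a) (fun b => hsum.prod_symm.prod_factor b)).symm

section Graph

set_option linter.unusedSectionVars false

variable {V : Type*} [Countable V] (G : WeightedGraph V)

lemma w_supp_finite (x : V) : (Function.support (G.w x)).Finite :=
  (G.locFin x).subset fun y hy => lt_of_le_of_ne (G.w_nonneg x y) (Ne.symm hy)

lemma summable_w (x : V) : Summable (G.w x) := summable_of_fin_supp (G.w_supp_finite x)

lemma mu_nonneg (x : V) : 0 ≤ G.mu x := tsum_nonneg fun y => G.w_nonneg x y

lemma mu_pos [Infinite V] (hconn : G.toSimpleGraph.Connected) (x : V) : 0 < G.mu x := by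
  obtain ⟨y, hy⟩ := exists_ne x
  obtain ⟨z, hz⟩ : ∃ z, 0 < G.w x z := by
    obtain ⟨p⟩ := hconn.preconnected x y
    cases p with
    | nil => exact absurd rfl hy
    | cons h _ => exact ⟨_, h⟩
  calc (0:ℝ) < G.w x z := hz
    _ ≤ G.mu x := Summable.le_tsum (G.summable_w x) z fun w _ => G.w_nonneg x w

lemma Pstep_nonneg (x y : V) : 0 ≤ G.Pstep x y :=
  div_nonneg (G.w_nonneg x y) (G.mu_nonneg x)

lemma Pstep_supp (x : V) : (Function.support (G.Pstep x)).Finite :=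
  (G.w_supp_finite x).subset fun y hy => by
    simp only [Function.mem_support, WeightedGraph.Pstep] at hy ⊢
    intro h0
    exact hy (by rw [h0, zero_div])

lemma summable_Pstep (x : V) : Summable (G.Pstep x) := summable_of_fin_supp (G.Pstep_supp x)

lemma tsum_Pstep (x : V) (hμ : 0 < G.mu x) : ∑' y, G.Pstep x y = 1 := by
  unfold WeightedGraph.Pstep
  rw [tsum_div_const]
  exact div_self hμ.ne'

lemma Pn_zero (x y : V) : G.Pn 0 x y = if x = y then 1 else 0 := rfl

lemma Pn_succ (n : ℕ) (x y : V) : G.Pn (n+1) x y = ∑' z, G.Pstep x z * G.Pn n z y := rfl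

lemma Pn_nonneg (n : ℕ) (x y : V) : 0 ≤ G.Pn n x y := by
  induction n generalizing x with
  | zero =>
    rw [Pn_zero]
    split <;> norm_num
  | succ n ih =>
    rw [Pn_succ]
    exact tsum_nonneg fun z => mul_nonneg (G.Pstep_nonneg x z) (ih z)

lemma Pn_supp (n : ℕ) (x : V) : (Function.support (G.Pn n x)).Finite := by
  induction n generalizing x with
  | zero =>
    apply (Set.finite_singleton x).subset
    intro y hy
    simp only [Function.mem_support, Pn_zero] at hy
    by_contra hne
    simp only [Set.mem_singleton_iff] at hne
    exact hy (if_neg (fun h => hne h.symm))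
  | succ n ih =>
    apply Set.Finite.subset ((G.Pstep_supp x).biUnion fun z _ => ih z)
    intro y hy
    simp only [Function.mem_support, Pn_succ] at hy
    by_contra hne
    apply hy
    have hz : ∀ z, G.Pstep x z * G.Pn n z y = 0 := by
      intro z
      by_cases h1 : G.Pstep x z = 0
      · rw [h1, zero_mul]
      · have h2 : G.Pn n z y = 0 := by
          by_contra h3
          exact hne (Set.mem_biUnion h1 h3)
        rw [h2, mul_zero]
    simp only [hz, tsum_zero]

lemma summable_Pn (n : ℕ) (x : V) : Summable (G.Pn n x) := summable_of_fin_supp (G.Pn_supp n x)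

lemma tsum_Pn (hμ : ∀ x, 0 < G.mu x) (n : ℕ) (x : V) : ∑' y, G.Pn n x y = 1 := by
  induction n generalizing x with
  | zero =>
    have h0 : ∀ y, y ≠ x → G.Pn 0 x y = 0 := by
      intro y hy
      rw [Pn_zero]
      exact if_neg (fun h => hy h.symm)
    rw [tsum_eq_single x h0, Pn_zero, if_pos rfl]
  | succ n ih =>
    have hswap : ∑' (y : V), ∑' (z : V), G.Pstep x z * G.Pn n z y
        = ∑' (z : V), ∑' (y : V), G.Pstep x z * G.Pn n z y := by
      apply tsum_swap'
      apply Set.Finite.subset (Set.Finite.prod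
        ((G.Pstep_supp x).biUnion fun z _ => G.Pn_supp n z) (G.Pstep_supp x))
      rintro ⟨y, z⟩ hyz
      simp only [Function.mem_support, Function.uncurry] at hyz
      have h1 : G.Pstep x z ≠ 0 := fun h => hyz (by rw [h, zero_mul])
      have h2 : G.Pn n z y ≠ 0 := fun h => hyz (by rw [h, mul_zero])
      rw [Set.mem_prod]
      exact ⟨Set.mem_biUnion h1 h2, h1⟩
    simp only [Pn_succ]
    rw [hswap]
    have hz : ∀ z : V, ∑' (y : V), G.Pstep x z * G.Pn n z y = G.Pstep x z := by
      intro z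
      rw [tsum_mul_left, ih z, mul_one]
    rw [tsum_congr hz, G.tsum_Pstep x (hμ x)]

lemma Pn_le_one (hμ : ∀ x, 0 < G.mu x) (n : ℕ) (x y : V) : G.Pn n x y ≤ 1 := by
  rw [← G.tsum_Pn hμ n x]
  exact Summable.le_tsum (G.summable_Pn n x) y fun z _ => G.Pn_nonneg n x z

end Graph

end WeightedGraph
namespace WeightedGraph

section Graph2

set_option linter.unusedSectionVars false

variable {V : Type*} [Countable V] (G : WeightedGraph V)

lemma chapman (a b : ℕ) (x y : V) :
    G.Pn (a + b) x y = ∑' z, G.Pn a x z * G.Pn b z y := by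
  induction a generalizing x with
  | zero =>
    rw [Nat.zero_add]
    symm
    have h0 : ∀ z, z ≠ x → G.Pn 0 x z * G.Pn b z y = 0 := by
      intro z hz
      rw [Pn_zero, if_neg (fun h => hz h.symm), zero_mul]
    rw [tsum_eq_single x h0, Pn_zero, if_pos rfl, one_mul]
  | succ a ih =>
    have hstep : a + 1 + b = (a + b) + 1 := by omega
    rw [hstep, Pn_succ]
    have h1 : ∀ z, G.Pstep x z * G.Pn (a + b) z y
        = ∑' u, G.Pstep x z * (G.Pn a z u * G.Pn b u y) := by
      intro z
      rw [ih z, tsum_mul_left]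
    rw [tsum_congr h1]
    have hswap : ∑' (z : V), ∑' (u : V), G.Pstep x z * (G.Pn a z u * G.Pn b u y)
        = ∑' (u : V), ∑' (z : V), G.Pstep x z * (G.Pn a z u * G.Pn b u y) := by
      apply tsum_swap'
      apply Set.Finite.subset (Set.Finite.prod (G.Pstep_supp x)
        ((G.Pstep_supp x).biUnion fun z _ => G.Pn_supp a z))
      rintro ⟨z, u⟩ hzu
      simp only [Function.mem_support, Function.uncurry] at hzu
      have h1 : G.Pstep x z ≠ 0 := fun h => hzu (by rw [h, zero_mul])
      have h2 : G.Pn a z u ≠ 0 := fun h => hzu (by rw [h, zero_mul, mul_zero])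
      rw [Set.mem_prod]
      exact ⟨h1, Set.mem_biUnion h1 h2⟩
    rw [hswap]
    apply tsum_congr
    intro u
    have h2 : ∀ z : V, G.Pstep x z * (G.Pn a z u * G.Pn b u y)
        = (G.Pstep x z * G.Pn a z u) * G.Pn b u y := fun z => by ring
    rw [tsum_congr h2, tsum_mul_right, ← Pn_succ]

lemma Pn_one (x y : V) : G.Pn 1 x y = G.Pstep x y := by
  rw [Pn_succ]
  have h0 : ∀ z, z ≠ y → G.Pstep x z * G.Pn 0 z y = 0 := by
    intro z hz
    rw [Pn_zero, if_neg hz, mul_zero]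
  rw [tsum_eq_single y h0, Pn_zero, if_pos rfl, mul_one]

lemma Pn_succ_right (n : ℕ) (x y : V) :
    G.Pn (n + 1) x y = ∑' z, G.Pn n x z * G.Pstep z y := by
  rw [chapman]
  exact tsum_congr fun z => by rw [Pn_one]

lemma reversible (hμ : ∀ x, 0 < G.mu x) (n : ℕ) (x y : V) :
    G.mu x * G.Pn n x y = G.mu y * G.Pn n y x := by
  induction n generalizing x y with
  | zero =>
    by_cases h : x = y
    · subst h; rfl
    · rw [Pn_zero, Pn_zero, if_neg h, if_neg (fun hh => h hh.symm), mul_zero, mul_zero]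
  | succ n ih =>
    rw [Pn_succ_right, Pn_succ, ← tsum_mul_left, ← tsum_mul_left]
    apply tsum_congr
    intro z
    have hz := (hμ z).ne'
    have hy := (hμ y).ne'
    calc G.mu x * (G.Pn n x z * G.Pstep z y)
        = (G.mu x * G.Pn n x z) * (G.w z y / G.mu z) := by rw [Pstep]; ring
      _ = (G.mu z * G.Pn n z x) * (G.w z y / G.mu z) := by rw [ih]
      _ = G.Pn n z x * G.w y z := by rw [G.w_symm z y]; field_simp
      _ = G.mu y * (G.Pstep y z * G.Pn n z x) := by rw [Pstep]; field_simp

end Graph2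

end WeightedGraph
namespace WeightedGraph

section Graph3

set_option linter.unusedSectionVars false

variable {V : Type*} [Countable V] (G : WeightedGraph V)

/-- The quantity `∑_z p_j(x,z)² μ(z) = p_{2j}(x,x)` (up to normalization). -/
def Mker (x : V) (j : ℕ) : ℝ := ∑' z, (G.Pn j x z) ^ 2 / G.mu z

lemma Mker_nonneg (x : V) (j : ℕ) : 0 ≤ G.Mker x j :=
  tsum_nonneg fun z => div_nonneg (sq_nonneg _) (G.mu_nonneg z)

lemma summable_Mker_term (x : V) (j : ℕ) :
    Summable (fun z => (G.Pn j x z) ^ 2 / G.mu z) :=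
  summable_of_fin_supp <| (G.Pn_supp j x).subset fun z hz => by
    simp only [Function.mem_support] at hz ⊢
    intro h0
    exact hz (by rw [h0]; simp)

lemma Pn_diag_even (hμ : ∀ x, 0 < G.mu x) (j : ℕ) (x : V) :
    G.Pn (j + j) x x = G.mu x * G.Mker x j := by
  rw [chapman, Mker, ← tsum_mul_left]
  apply tsum_congr
  intro z
  have h1 : G.Pn j z x = G.mu x * G.Pn j x z / G.mu z := by
    rw [eq_div_iff (hμ z).ne', mul_comm (G.Pn j z x) (G.mu z), G.reversible hμ j z x]
  rw [h1]
  field_simp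

lemma Mker_succ_le (hμ : ∀ x, 0 < G.mu x) (x : V) (j : ℕ) :
    G.Mker x (j + 1) ≤ G.Mker x j := by
  classical
  set s : Finset V := (G.Pn_supp j x).toFinset with hs
  -- pointwise Cauchy-Schwarz bound
  have key : ∀ y : V, (G.Pn (j+1) x y) ^ 2 / G.mu y
      ≤ ∑' z, (G.Pn j x z) ^ 2 * G.w z y / (G.mu z) ^ 2 := by
    intro y
    have h1 : G.Pn (j+1) x y = ∑ z ∈ s, G.Pn j x z * G.Pstep z y := by
      rw [Pn_succ_right]
      apply tsum_eq_sum
      intro z hz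
      have : G.Pn j x z = 0 := by
        by_contra h
        exact hz ((G.Pn_supp j x).mem_toFinset.mpr h)
      rw [this, zero_mul]
    have hcs : (∑ z ∈ s, G.Pn j x z * G.Pstep z y) ^ 2
        ≤ (∑ z ∈ s, (G.Pn j x z) ^ 2 * G.w z y / (G.mu z) ^ 2) * (∑ z ∈ s, G.w z y) := by
      have h2 := Finset.sum_mul_sq_le_sq_mul_sq s
        (fun z => G.Pn j x z * Real.sqrt (G.w z y) / G.mu z)
        (fun z => Real.sqrt (G.w z y))
      have e1 : ∀ z ∈ s, G.Pn j x z * Real.sqrt (G.w z y) / G.mu z * Real.sqrt (G.w z y)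
          = G.Pn j x z * G.Pstep z y := by
        intro z _
        rw [WeightedGraph.Pstep]
        rw [div_mul_eq_mul_div, mul_assoc, Real.mul_self_sqrt (G.w_nonneg z y)]
        ring
      have e2 : ∀ z ∈ s, (G.Pn j x z * Real.sqrt (G.w z y) / G.mu z) ^ 2
          = (G.Pn j x z) ^ 2 * G.w z y / (G.mu z) ^ 2 := by
        intro z _
        rw [div_pow, mul_pow, Real.sq_sqrt (G.w_nonneg z y)]
      have e3 : ∀ z ∈ s, (Real.sqrt (G.w z y)) ^ 2 = G.w z y := by
        intro z _
        exact Real.sq_sqrt (G.w_nonneg z y)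
      rw [Finset.sum_congr rfl e1, Finset.sum_congr rfl e2, Finset.sum_congr rfl e3] at h2
      exact h2
    have hws : (∑ z ∈ s, G.w z y) ≤ G.mu y := by
      have : (∑ z ∈ s, G.w z y) = ∑ z ∈ s, G.w y z :=
        Finset.sum_congr rfl fun z _ => G.w_symm z y
      rw [this]
      exact Summable.sum_le_tsum s (fun z _ => G.w_nonneg y z) (G.summable_w y)
    have hT0 : 0 ≤ ∑ z ∈ s, (G.Pn j x z) ^ 2 * G.w z y / (G.mu z) ^ 2 :=
      Finset.sum_nonneg fun z _ => div_nonneg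
        (mul_nonneg (sq_nonneg _) (G.w_nonneg z y)) (sq_nonneg _)
    have h3 : (G.Pn (j+1) x y) ^ 2
        ≤ (∑ z ∈ s, (G.Pn j x z) ^ 2 * G.w z y / (G.mu z) ^ 2) * G.mu y := by
      rw [h1]
      exact hcs.trans (mul_le_mul_of_nonneg_left hws hT0)
    have h4 : (G.Pn (j+1) x y) ^ 2 / G.mu y
        ≤ ∑ z ∈ s, (G.Pn j x z) ^ 2 * G.w z y / (G.mu z) ^ 2 := by
      rw [div_le_iff₀ (hμ y)]
      exact h3
    refine h4.trans (Summable.sum_le_tsum s (fun z _ => div_nonneg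
      (mul_nonneg (sq_nonneg _) (G.w_nonneg z y)) (sq_nonneg _)) ?_)
    apply summable_of_fin_supp
    apply (G.Pn_supp j x).subset
    intro z hz
    simp only [Function.mem_support] at hz ⊢
    intro h0
    exact hz (by rw [h0]; simp)
  -- summability of the majorant in y
  have hUsupp : (Function.support
      (fun y => ∑' z, (G.Pn j x z) ^ 2 * G.w z y / (G.mu z) ^ 2)).Finite := by
    apply Set.Finite.subset ((G.Pn_supp j x).biUnion fun z _ => G.w_supp_finite z)
    intro y hy
    simp only [Function.mem_support] at hy
    by_contra hne
    apply hy
    have hz : ∀ z, (G.Pn j x z) ^ 2 * G.w z y / (G.mu z) ^ 2 = 0 := by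
      intro z
      by_cases h1 : G.Pn j x z = 0
      · rw [h1]; simp
      · have h2 : G.w z y = 0 := by
          by_contra h3
          exact hne (Set.mem_biUnion h1 h3)
        rw [h2]; simp
    simp only [hz, tsum_zero]
  have hmono : G.Mker x (j+1) ≤ ∑' y, ∑' z, (G.Pn j x z) ^ 2 * G.w z y / (G.mu z) ^ 2 := by
    apply Summable.tsum_le_tsum key
    · apply summable_of_fin_supp
      apply (G.Pn_supp (j+1) x).subset
      intro y hy
      simp only [Function.mem_support] at hy ⊢
      intro h0
      exact hy (by rw [h0]; simp)
    · exact summable_of_fin_supp hUsupp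
  have hswap : ∑' (y : V), ∑' (z : V), (G.Pn j x z) ^ 2 * G.w z y / (G.mu z) ^ 2
      = ∑' (z : V), ∑' (y : V), (G.Pn j x z) ^ 2 * G.w z y / (G.mu z) ^ 2 := by
    apply tsum_swap'
    apply Set.Finite.subset (Set.Finite.prod
      ((G.Pn_supp j x).biUnion fun z _ => G.w_supp_finite z) (G.Pn_supp j x))
    rintro ⟨y, z⟩ hyz
    simp only [Function.mem_support, Function.uncurry] at hyz
    have h1 : G.Pn j x z ≠ 0 := fun h => hyz (by rw [h]; simp)
    have h2 : G.w z y ≠ 0 := fun h => hyz (by rw [h]; simp)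
    rw [Set.mem_prod]
    exact ⟨Set.mem_biUnion h1 h2, h1⟩
  have hfinal : ∑' (z : V), ∑' (y : V), (G.Pn j x z) ^ 2 * G.w z y / (G.mu z) ^ 2
      = G.Mker x j := by
    apply tsum_congr
    intro z
    have h1 : ∀ y : V, (G.Pn j x z) ^ 2 * G.w z y / (G.mu z) ^ 2
        = ((G.Pn j x z) ^ 2 / (G.mu z) ^ 2) * G.w z y := fun y => by ring
    rw [tsum_congr h1, tsum_mul_left]
    show (G.Pn j x z) ^ 2 / (G.mu z) ^ 2 * G.mu z = _
    rw [div_mul_eq_mul_div, sq (G.mu z), ← div_div, mul_div_assoc,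
      div_self (hμ z).ne', mul_one]
  rw [hswap, hfinal] at hmono
  exact hmono

lemma Mker_anti (hμ : ∀ x, 0 < G.mu x) (x : V) : Antitone (G.Mker x) :=
  antitone_nat_of_succ_le fun j => G.Mker_succ_le hμ x j

lemma Pn_diag_odd_le (hμ : ∀ x, 0 < G.mu x) (j : ℕ) (x : V) :
    G.Pn (j + (j + 1)) x x ≤ G.mu x * G.Mker x j := by
  rw [chapman]
  have key : ∀ z : V, G.Pn j x z * G.Pn (j+1) z x
      ≤ G.mu x * (((G.Pn j x z) ^ 2 / G.mu z + (G.Pn (j+1) x z) ^ 2 / G.mu z) / 2) := by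
    intro z
    have h1 : G.Pn (j+1) z x = G.mu x * G.Pn (j+1) x z / G.mu z := by
      rw [eq_div_iff (hμ z).ne', mul_comm (G.Pn (j+1) z x) (G.mu z), G.reversible hμ (j+1) z x]
    rw [h1]
    have hab : G.Pn j x z * G.Pn (j+1) x z
        ≤ ((G.Pn j x z) ^ 2 + (G.Pn (j+1) x z) ^ 2) / 2 := by
      nlinarith [two_mul_le_add_sq (G.Pn j x z) (G.Pn (j+1) x z)]
    have h2 : G.Pn j x z * (G.mu x * G.Pn (j+1) x z / G.mu z)
        = G.mu x * ((G.Pn j x z * G.Pn (j+1) x z) / G.mu z) := by ring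
    rw [h2]
    apply mul_le_mul_of_nonneg_left _ (G.mu_nonneg x)
    have h3 : (((G.Pn j x z) ^ 2 / G.mu z + (G.Pn (j+1) x z) ^ 2 / G.mu z) / 2)
        = (((G.Pn j x z) ^ 2 + (G.Pn (j+1) x z) ^ 2) / 2) / G.mu z := by ring
    rw [h3]
    gcongr
    exact G.mu_nonneg z
  have hsumA := G.summable_Mker_term x j
  have hsumB := G.summable_Mker_term x (j+1)
  have hle : ∑' z, G.Pn j x z * G.Pn (j+1) z x
      ≤ ∑' z, G.mu x * (((G.Pn j x z) ^ 2 / G.mu z + (G.Pn (j+1) x z) ^ 2 / G.mu z) / 2) := by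
    apply Summable.tsum_le_tsum key
    · apply summable_of_fin_supp
      apply (G.Pn_supp j x).subset
      intro z hz
      simp only [Function.mem_support] at hz ⊢
      intro h0
      exact hz (by rw [h0, zero_mul])
    · apply Summable.mul_left
      exact ((hsumA.add hsumB).div_const 2)
  refine hle.trans ?_
  rw [tsum_mul_left]
  apply mul_le_mul_of_nonneg_left _ (G.mu_nonneg x)
  have h4 : ∑' z, (((G.Pn j x z) ^ 2 / G.mu z + (G.Pn (j+1) x z) ^ 2 / G.mu z) / 2)
      = (G.Mker x j + G.Mker x (j+1)) / 2 := by
    rw [tsum_div_const, Summable.tsum_add hsumA hsumB]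
    rfl
  rw [h4]
  have h5 := G.Mker_succ_le hμ x j
  have h6 := G.Mker_nonneg x j
  linarith

end Graph3

end WeightedGraph
namespace WeightedGraph

section Graph4

set_option linter.unusedSectionVars false

variable {V : Type*} [Countable V] (G : WeightedGraph V)

lemma Pn_diag_le (hμ : ∀ x, 0 < G.mu x) (n : ℕ) (x : V) :
    G.Pn n x x ≤ G.mu x * G.Mker x (n / 2) := by
  obtain ⟨k, hk | hk⟩ := Nat.even_or_odd' n
  · have h2 : n / 2 = k := by omega
    have h3 : n = k + k := by omega
    rw [h2, h3, G.Pn_diag_even hμ k x]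
  · have h2 : n / 2 = k := by omega
    have h3 : n = k + (k + 1) := by omega
    rw [h2, h3]
    exact G.Pn_diag_odd_le hμ k x

lemma hk_diag_le (hμ : ∀ x, 0 < G.mu x) (n : ℕ) (x : V) :
    G.hk n x x ≤ G.Mker x (n / 2) := by
  rw [WeightedGraph.hk, div_le_iff₀ (hμ x), mul_comm]
  exact G.Pn_diag_le hμ n x

lemma vol_nonneg (x : V) (r : ℝ) : 0 ≤ G.vol x r :=
  tsum_nonneg fun y => G.mu_nonneg y.1

end Graph4

lemma hockey (m : ℕ) (hm : 1 ≤ m) (K : ℕ) :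
    ∑ j ∈ Finset.range K, (j + m - 1).choose (m - 1) = (K + m - 1).choose m := by
  induction K with
  | zero =>
    simp only [Finset.range_zero, Finset.sum_empty]
    exact (Nat.choose_eq_zero_of_lt (by omega)).symm
  | succ K ih =>
    rw [Finset.sum_range_succ, ih]
    have h1 : K + 1 + m - 1 = (K + m - 1) + 1 := by omega
    have h2 : m - 1 + 1 = m := by omega
    rw [h1, ← h2, Nat.choose_succ_succ, Nat.succ_eq_add_one, h2]
    omega

end WeightedGraph
namespace WeightedGraph

section Graph5

set_option linter.unusedSectionVars false

variable {V : Type*} [Countable V] (G : WeightedGraph V)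

lemma choose_cast_le (m k : ℕ) (hm : 1 ≤ m) :
    ((k + m - 1).choose k : ℝ) ≤ (m : ℝ) ^ (m - 1) * ((k : ℝ) + 1) ^ (m - 1) := by
  have h1 : (k + m - 1).choose k = (k + m - 1).choose (m - 1) := by
    rw [← Nat.choose_symm (show k ≤ k + m - 1 by omega)]
    congr 1
    omega
  have h2 : (k + m - 1).choose (m - 1) ≤ (k + m - 1) ^ (m - 1) := Nat.choose_le_pow _ _
  have h3 : (k + m - 1) ^ (m - 1) ≤ (m * (k + 1)) ^ (m - 1) := by
    apply Nat.pow_le_pow_left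
    have h' : k ≤ m * k := Nat.le_mul_of_pos_left k (by omega)
    have h'' : m * (k + 1) = m * k + m := by ring
    omega
  calc ((k + m - 1).choose k : ℝ) ≤ ((m * (k + 1)) ^ (m - 1) : ℕ) := by
        exact_mod_cast (h1 ▸ h2).trans h3
    _ = (m : ℝ) ^ (m - 1) * ((k : ℝ) + 1) ^ (m - 1) := by push_cast; rw [mul_pow]

lemma zpow_split (lam : ℝ) (hlam : 0 < lam) (m k : ℕ) :
    (1 + lam) ^ (-((m : ℤ) + (k : ℤ)))
      = (1 + lam) ^ (-(m : ℤ)) * ((1 + lam)⁻¹) ^ k := by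
  have h0 : (1 + lam) ≠ 0 := by positivity
  rw [neg_add, zpow_add₀ h0]
  congr 1
  rw [zpow_neg, zpow_natCast, inv_pow]

lemma summable_resolvent (hμ : ∀ x, 0 < G.mu x) (m : ℕ) (hm : 1 ≤ m)
    {lam : ℝ} (hlam0 : 0 < lam) (x : V) :
    Summable (fun k : ℕ =>
      ((k + m - 1).choose k : ℝ) * (1 + lam) ^ (-((m : ℤ) + (k : ℤ))) * G.Pn k x x) := by
  have h0 : (0:ℝ) < 1 + lam := by linarith
  have h1 : (1:ℝ) < 1 + lam := by linarith
  set r : ℝ := (1 + lam)⁻¹ with hr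
  have hrpos : 0 < r := inv_pos.mpr h0
  have hrlt : ‖r‖ < 1 := by
    rw [Real.norm_eq_abs, abs_of_pos hrpos]
    rw [hr, inv_lt_one_iff₀]
    right; exact h1
  have hgeo : Summable (fun k : ℕ => (k : ℝ) ^ (m - 1) * r ^ k) :=
    summable_pow_mul_geometric_of_norm_lt_one (m - 1) hrlt
  have hshift : Summable (fun k : ℕ => ((k : ℝ) + 1) ^ (m - 1) * r ^ (k + 1)) := by
    have := (summable_nat_add_iff 1).mpr hgeo
    push_cast at this
    exact this
  set c : ℝ := (m : ℝ) ^ (m - 1) * (1 + lam) ^ (-(m : ℤ)) * (1 + lam) with hc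
  apply Summable.of_nonneg_of_le
      (f := fun k : ℕ => c * (((k : ℝ) + 1) ^ (m - 1) * r ^ (k + 1)))
  · intro k
    apply mul_nonneg (mul_nonneg (Nat.cast_nonneg _) (zpow_pos h0 _).le)
    exact G.Pn_nonneg k x x
  · intro k
    have e1 : r ^ k = (1 + lam) * r ^ (k + 1) := by
      rw [pow_succ]
      rw [hr]
      field_simp
    calc ((k + m - 1).choose k : ℝ) * (1 + lam) ^ (-((m : ℤ) + (k : ℤ))) * G.Pn k x x
        ≤ ((k + m - 1).choose k : ℝ) * (1 + lam) ^ (-((m : ℤ) + (k : ℤ))) * 1 := by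
          apply mul_le_mul_of_nonneg_left (G.Pn_le_one hμ k x x)
          exact mul_nonneg (Nat.cast_nonneg _) (zpow_pos h0 _).le
      _ = ((k + m - 1).choose k : ℝ) * ((1 + lam) ^ (-(m : ℤ)) * r ^ k) := by
          rw [mul_one, zpow_split lam hlam0 m k]
      _ ≤ ((m : ℝ) ^ (m - 1) * ((k : ℝ) + 1) ^ (m - 1)) * ((1 + lam) ^ (-(m : ℤ)) * r ^ k) := by
          apply mul_le_mul_of_nonneg_right (choose_cast_le m k hm)
          exact mul_nonneg (zpow_pos h0 _).le (pow_nonneg hrpos.le _)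
      _ = c * (((k : ℝ) + 1) ^ (m - 1) * r ^ (k + 1)) := by
          rw [e1, hc]
          ring
  · exact hshift.mul_left c

end Graph5

end WeightedGraph
namespace WeightedGraph

section Graph6

set_option linter.unusedSectionVars false

variable {V : Type*} [Countable V] (G : WeightedGraph V)

lemma resolvent_lower (hμ : ∀ x, 0 < G.mu x) {m : ℕ} (hm : 1 ≤ m) (x : V)
    {n : ℕ} (hn2 : 2 ≤ n) :
    G.Mker x (n / 2) *
        (((2:ℝ) ^ m * 3)⁻¹ * ((((n / 2 : ℕ) : ℝ) + 1) ^ m / (m.factorial : ℝ)))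
      ≤ G.resolventKer ((n : ℝ))⁻¹ m x x := by
  classical
  set J : ℕ := n / 2 with hJ
  set lam : ℝ := ((n : ℝ))⁻¹ with hlam
  have hnR : (2:ℝ) ≤ (n : ℝ) := by exact_mod_cast hn2
  have hlam0 : 0 < lam := by rw [hlam]; positivity
  have hlam1 : lam < 1 := by
    rw [hlam, inv_lt_one_iff₀]; right; linarith
  have h0 : (0:ℝ) < 1 + lam := by linarith
  have h1 : (1:ℝ) < 1 + lam := by linarith
  have hmf0 : (0:ℝ) < (m.factorial : ℝ) := by exact_mod_cast m.factorial_pos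
  set A : ℕ → ℝ := fun k =>
    ((k + m - 1).choose k : ℝ) * (1 + lam) ^ (-((m : ℤ) + (k : ℤ))) * G.Pn k x x with hA
  have ha : Summable A := G.summable_resolvent hμ m hm hlam0 x
  have hA_nonneg : ∀ k, 0 ≤ A k := fun k =>
    mul_nonneg (mul_nonneg (Nat.cast_nonneg _) (zpow_pos h0 _).le) (G.Pn_nonneg k x x)
  set coef : ℕ → ℝ := fun j =>
    ((2*j + m - 1).choose (2*j) : ℝ) * (1 + lam) ^ (-((m : ℤ) + ((2*j : ℕ) : ℤ))) with hcoef
  have hcoef_nonneg : ∀ j, 0 ≤ coef j := fun j =>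
    mul_nonneg (Nat.cast_nonneg _) (zpow_pos h0 _).le
  -- step 1 : tsum lower bound
  have hterm : ∀ j ∈ Finset.range (J+1), coef j * (G.mu x * G.Mker x J) ≤ A (2*j) := by
    intro j hj
    have hjJ : j ≤ J := by
      have := Finset.mem_range.mp hj; omega
    have hPn2j : G.Pn (2*j) x x = G.mu x * G.Mker x j := by
      have h2 : 2*j = j + j := by omega
      rw [h2, G.Pn_diag_even hμ j x]
    have : A (2*j) = coef j * (G.mu x * G.Mker x j) := by
      rw [hA, hcoef]
      simp only []
      rw [hPn2j]
    rw [this]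
    apply mul_le_mul_of_nonneg_left _ (hcoef_nonneg j)
    exact mul_le_mul_of_nonneg_left (G.Mker_anti hμ x hjJ) (G.mu_nonneg x)
  have hsum1 : (∑ j ∈ Finset.range (J+1), coef j) * (G.mu x * G.Mker x J) ≤ ∑' k, A k := by
    calc (∑ j ∈ Finset.range (J+1), coef j) * (G.mu x * G.Mker x J)
        = ∑ j ∈ Finset.range (J+1), coef j * (G.mu x * G.Mker x J) := by
          rw [Finset.sum_mul]
      _ ≤ ∑ j ∈ Finset.range (J+1), A (2*j) := Finset.sum_le_sum hterm
      _ = ∑ k ∈ (Finset.range (J+1)).image (fun j => 2*j), A k :=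
          (Finset.sum_image (fun i _ j _ h => by omega)).symm
      _ ≤ ∑' k, A k := Summable.sum_le_tsum _ (fun k _ => hA_nonneg k) ha
  have hres_eq : G.resolventKer lam m x x = (∑' k, A k) / G.mu x := rfl
  have hres_ge : (∑ j ∈ Finset.range (J+1), coef j) * G.Mker x J
      ≤ G.resolventKer lam m x x := by
    rw [hres_eq, le_div_iff₀ (hμ x)]
    calc (∑ j ∈ Finset.range (J+1), coef j) * G.Mker x J * G.mu x
        = (∑ j ∈ Finset.range (J+1), coef j) * (G.mu x * G.Mker x J) := by ring
      _ ≤ ∑' k, A k := hsum1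
  -- step 2 : coefficient sum lower bound
  have hterm2 : ∀ j ∈ Finset.range (J+1),
      ((2*j + m - 1).choose (2*j) : ℝ) * ((2:ℝ) ^ m * 3)⁻¹ ≤ coef j := by
    intro j hj
    have hjJ : j ≤ J := by
      have := Finset.mem_range.mp hj; omega
    have h2j : 2*j ≤ n := by omega
    rw [hcoef]
    apply mul_le_mul_of_nonneg_left _ (Nat.cast_nonneg _)
    have hexp : (1 + lam) ^ (-((m : ℤ) + ((2*j : ℕ) : ℤ))) = ((1 + lam) ^ (m + 2*j))⁻¹ := by
      have he : -((m : ℤ) + ((2*j : ℕ) : ℤ)) = -(((m + 2*j : ℕ) : ℤ)) := by push_cast; ring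
      rw [he, zpow_neg, zpow_natCast]
    rw [hexp]
    have hpow_le : (1 + lam) ^ (m + 2*j) ≤ 2 ^ m * 3 := by
      have hexp3 : (1 + lam) ^ n ≤ 3 := by
        have he1 : 1 + lam ≤ Real.exp lam := by
          have := Real.add_one_le_exp lam; linarith
        have he2 : (1 + lam) ^ n ≤ (Real.exp lam) ^ n := pow_le_pow_left₀ h0.le he1 n
        have he3 : (Real.exp lam) ^ n = Real.exp (lam * (n:ℝ)) := by
          rw [mul_comm, Real.exp_nat_mul]
        have he4 : lam * (n:ℝ) = 1 := by
          rw [hlam]; field_simp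
        have he5 := Real.exp_one_lt_d9
        rw [he3, he4] at he2
        linarith
      calc (1 + lam) ^ (m + 2*j) ≤ (1 + lam) ^ (m + n) :=
            pow_le_pow_right₀ h1.le (by omega)
        _ = (1 + lam) ^ m * (1 + lam) ^ n := pow_add _ _ _
        _ ≤ 2 ^ m * 3 := by
            apply mul_le_mul _ hexp3 (pow_nonneg h0.le n) (by positivity)
            exact pow_le_pow_left₀ h0.le (by linarith) m
    exact inv_anti₀ (by positivity) hpow_le
  have hchoose : ((((J:ℝ)) + 1) ^ m / (m.factorial : ℝ))
      ≤ ∑ j ∈ Finset.range (J+1), ((2*j + m - 1).choose (2*j) : ℝ) := by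
    have hnat : (J+1) ^ m ≤ m.factorial * ∑ j ∈ Finset.range (J+1), (2*j + m - 1).choose (2*j) := by
      have e1 : ∀ j, (2*j + m - 1).choose (2*j) = (2*j + m - 1).choose (m - 1) := by
        intro j
        rw [← Nat.choose_symm (show 2*j ≤ 2*j + m - 1 by omega)]
        congr 1
        omega
      have e2 : ∑ j ∈ Finset.range (J+1), (j + m - 1).choose (m-1)
          ≤ ∑ j ∈ Finset.range (J+1), (2*j + m - 1).choose (2*j) := by
        apply Finset.sum_le_sum
        intro j _
        rw [e1 j]
        exact Nat.choose_le_choose _ (by omega)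
      have e3 : ∑ j ∈ Finset.range (J+1), (j + m - 1).choose (m-1) = (J + m).choose m := by
        rw [hockey m hm (J+1)]
        congr 1
        omega
      have e4 : (J+1) ^ m ≤ (J + m).descFactorial m := by
        have h' := Nat.pow_sub_le_descFactorial (J + m) m
        have h'' : J + m + 1 - m = J + 1 := by omega
        rwa [h''] at h'
      rw [Nat.descFactorial_eq_factorial_mul_choose] at e4
      calc (J+1) ^ m ≤ m.factorial * (J + m).choose m := e4
        _ ≤ m.factorial * ∑ j ∈ Finset.range (J+1), (2*j + m - 1).choose (2*j) :=
            Nat.mul_le_mul_left _ (e3 ▸ e2)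
    rw [div_le_iff₀ hmf0]
    calc (((J:ℝ)) + 1) ^ m = (((J+1) ^ m : ℕ) : ℝ) := by push_cast; ring
      _ ≤ ((m.factorial * ∑ j ∈ Finset.range (J+1), (2*j + m - 1).choose (2*j) : ℕ) : ℝ) := by
          exact_mod_cast hnat
      _ = (∑ j ∈ Finset.range (J+1), ((2*j + m - 1).choose (2*j) : ℝ)) * (m.factorial : ℝ) := by
          push_cast; ring
  have hcoef_ge : ((2:ℝ) ^ m * 3)⁻¹ * ((((J:ℝ)) + 1) ^ m / (m.factorial : ℝ))
      ≤ ∑ j ∈ Finset.range (J+1), coef j := by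
    calc ((2:ℝ) ^ m * 3)⁻¹ * ((((J:ℝ)) + 1) ^ m / (m.factorial : ℝ))
        ≤ ((2:ℝ) ^ m * 3)⁻¹ * ∑ j ∈ Finset.range (J+1), ((2*j + m - 1).choose (2*j) : ℝ) :=
          mul_le_mul_of_nonneg_left hchoose (by positivity)
      _ = ∑ j ∈ Finset.range (J+1), ((2*j + m - 1).choose (2*j) : ℝ) * ((2:ℝ) ^ m * 3)⁻¹ := by
          rw [Finset.mul_sum]
          exact Finset.sum_congr rfl fun j _ => by ring
      _ ≤ ∑ j ∈ Finset.range (J+1), coef j := Finset.sum_le_sum hterm2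
  -- combine
  calc G.Mker x J * (((2:ℝ) ^ m * 3)⁻¹ * ((((J:ℕ):ℝ) + 1) ^ m / (m.factorial : ℝ)))
      ≤ G.Mker x J * ∑ j ∈ Finset.range (J+1), coef j :=
        mul_le_mul_of_nonneg_left hcoef_ge (G.Mker_nonneg x J)
    _ = (∑ j ∈ Finset.range (J+1), coef j) * G.Mker x J := mul_comm _ _
    _ ≤ G.resolventKer lam m x x := hres_ge

end Graph6

end WeightedGraph

/-- **Theorem 3.15.** Under `(p0)`, `(VD)`, `(TC)` and the resolvent kernel bound
`g_{λ,m}(x,x) ≤ C·λ^{-m}/V(x,e(x,λ⁻¹))` (for some sufficiently large `m > 1`),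
the local diagonal upper estimate `(DUE)` holds. -/
theorem resolvent_to_due {V : Type*} [Countable V] [Infinite V]
    (G : WeightedGraph V) (hconn : G.toSimpleGraph.Connected)
    (p0 : ℝ) (hp0 : 0 < p0) (hP0 : G.P0 p0) (hVD : G.VD) (hTC : G.TC)
    (hres : ∃ (m : ℕ) (C : ℝ), 1 < m ∧ 0 < C ∧ ∀ (lam : ℝ), 0 < lam → lam < 1 → ∀ x : V,
      G.resolventKer lam m x x ≤ C * lam ^ (-(m : ℤ)) / G.vol x (G.einv x lam⁻¹)) :
    G.DUE := by
  classical
  obtain ⟨m, C, hm, hC, hbound⟩ := hres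
  have hm1 : 1 ≤ m := hm.le
  have hμ : ∀ x, 0 < G.mu x := G.mu_pos hconn
  have hmf0 : (0:ℝ) < (m.factorial : ℝ) := by exact_mod_cast m.factorial_pos
  refine ⟨3 * 4 ^ m * (m.factorial : ℝ) * C, by positivity, ?_⟩
  intro x n hn
  have hVnonneg : 0 ≤ G.vol x (G.einv x n) := G.vol_nonneg x _
  by_cases hn1 : n = 1
  · subst hn1
    have hP : G.Pn 1 x x = 0 := by
      rw [G.Pn_one, WeightedGraph.Pstep, G.w_irrefl, zero_div]
    show G.Pn 1 x x / G.mu x ≤ _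
    rw [hP, zero_div]
    exact div_nonneg (by positivity) hVnonneg
  · have hn2 : 2 ≤ n := by omega
    have hnR : (2:ℝ) ≤ (n:ℝ) := by exact_mod_cast hn2
    have hlam0 : (0:ℝ) < ((n:ℝ))⁻¹ := by positivity
    have hlam1 : ((n:ℝ))⁻¹ < 1 := by
      rw [inv_lt_one_iff₀]; right; linarith
    have hb := hbound ((n:ℝ))⁻¹ hlam0 hlam1 x
    rw [inv_inv] at hb
    have hlz : ((n:ℝ))⁻¹ ^ (-(m:ℤ)) = (n:ℝ) ^ m := by
      rw [zpow_neg, zpow_natCast, inv_pow, inv_inv]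
    rw [hlz] at hb
    set J : ℕ := n / 2 with hJ
    set Vx : ℝ := G.vol x (G.einv x (n:ℝ)) with hVx
    set D : ℝ := ((2:ℝ) ^ m * 3)⁻¹ * ((((J:ℕ):ℝ) + 1) ^ m / (m.factorial : ℝ)) with hD
    have hD0 : 0 < D := by rw [hD]; positivity
    have hlow := G.resolvent_lower hμ hm1 x hn2
    have hchain : G.Mker x J * D ≤ C * (n:ℝ) ^ m / Vx := le_trans hlow hb
    have hfin : G.hk n x x ≤ G.Mker x J := G.hk_diag_le hμ n x
    rcases eq_or_lt_of_le hVnonneg with hV | hV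
    · rw [← hV, div_zero] at hchain
      have hM0 : G.Mker x J ≤ 0 := by
        by_contra h
        push_neg at h
        nlinarith
      rw [← hV, div_zero]
      linarith
    · have hMle : G.Mker x J ≤ (C * (n:ℝ) ^ m / D) / Vx := by
        rw [div_right_comm, le_div_iff₀ hD0]
        exact hchain
      have hCD : C * (n:ℝ) ^ m / D ≤ 3 * 4 ^ m * (m.factorial : ℝ) * C := by
        rw [div_le_iff₀ hD0]
        have hn2J : (n:ℝ) ≤ 2 * (((J:ℕ):ℝ) + 1) := by
          have h' : n ≤ 2 * (J + 1) := by omega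
          have := (Nat.cast_le (α := ℝ)).mpr h'
          push_cast at this
          linarith
        have hpow : (n:ℝ) ^ m ≤ (2 * (((J:ℕ):ℝ) + 1)) ^ m :=
          pow_le_pow_left₀ (Nat.cast_nonneg n) hn2J m
        calc C * (n:ℝ) ^ m ≤ C * (2 * (((J:ℕ):ℝ) + 1)) ^ m :=
              mul_le_mul_of_nonneg_left hpow hC.le
          _ = 3 * 4 ^ m * (m.factorial : ℝ) * C * D := by
              rw [hD, mul_pow, show (4:ℝ) = 2 * 2 by norm_num, mul_pow]
              field_simp
      refine hfin.trans (hMle.trans ?_)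
      show (C * (n:ℝ) ^ m / D) / Vx ≤ _ / Vx
      gcongr
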